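/- Let μ be the Thue-Morse morphism and x̄ the letter complement. For all k ≥ 1 and letters x, y, z ∈ {0,1}: the word x·μ^k(y·ȳ·y)·z is a factor of the Thue-Morse word if and only if x̄·μ^{k-1}(y·ȳ·y)·z is a factor of the Thue-Morse word. -/

import Mathlib

/-- The Thue-Morse morphism on letters: μ(0)=01, μ(1)=10 (0 = `false`, 1 = `true`). -/
def mu : Bool → List Bool
  | false => [false, true]
  | true  => [true, false]

/-- The Thue-Morse morphism extended to words. -/
def muW (w : List Bool) : List Bool := w.flatMap mu

/-- The finite word `u` is a prefix of the infinite word `x`. -/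
def IsPrefixI (u : List Bool) (x : ℕ → Bool) : Prop :=
  ∀ i, i < u.length → u.getD i false = x i

/-- `t` is the Thue-Morse word: every `μ^n(0)` is a prefix of `t`. -/
def IsTMWord (t : ℕ → Bool) : Prop :=
  ∀ n, IsPrefixI (muW^[n] [false]) t

/-- The finite word `u` is a factor of the infinite word `x`. -/
def IsFactorI (u : List Bool) (x : ℕ → Bool) : Prop :=
  ∃ k, ∀ i, i < u.length → u.getD i false = x (k + i)

lemma mu_eq (a : Bool) : mu a = [a, !a] := by cases a <;> rfl

lemma muW_cons (a : Bool) (w : List Bool) : muW (a :: w) = a :: (!a) :: muW w := by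
  simp [muW, mu_eq]

lemma length_muW (w : List Bool) : (muW w).length = 2 * w.length := by
  induction w with
  | nil => rfl
  | cons a w ih => rw [muW_cons]; simp [ih]; ring

lemma muW_getD (w : List Bool) (j : ℕ) (hj : j < w.length) :
    (muW w).getD (2*j) false = w.getD j false ∧
    (muW w).getD (2*j+1) false = !(w.getD j false) := by
  induction w generalizing j with
  | nil => simp at hj
  | cons a w ih =>
    rw [muW_cons]
    cases j with
    | zero => simp
    | succ j =>
      have h := ih j (by simpa using Nat.lt_of_succ_lt_succ hj)
      have e2 : 2 * (j + 1) = (2 * j + 1) + 1 := by ring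
      rw [e2]
      simpa using h

lemma length_iter (n : ℕ) : (muW^[n] [false]).length = 2 ^ n := by
  induction n with
  | zero => rfl
  | succ n ih => rw [Function.iterate_succ_apply', length_muW, ih, pow_succ]; ring

lemma t_getD {t : ℕ → Bool} (ht : IsTMWord t) (n i : ℕ) (h : i < 2 ^ n) :
    (muW^[n] [false]).getD i false = t i := ht n i (by rwa [length_iter])

lemma t_even_odd {t : ℕ → Bool} (ht : IsTMWord t) (i : ℕ) :
    t (2 * i) = t i ∧ t (2 * i + 1) = !t i := by
  set n := 2 * i + 1 with hn
  have hin : i < 2 ^ n := lt_of_le_of_lt (by omega) (Nat.lt_two_pow_self (n := n))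
  have h2 : 2 * i + 1 < 2 ^ (n + 1) := by
    have := Nat.lt_two_pow_self (n := n)
    rw [pow_succ]; omega
  have e1 := t_getD ht n i hin
  have eE := t_getD ht (n+1) (2*i) (by omega)
  have eO := t_getD ht (n+1) (2*i+1) h2
  rw [Function.iterate_succ_apply'] at eE eO
  have key := muW_getD (muW^[n] [false]) i (by rw [length_iter]; exact hin)
  rw [eE, eO, e1] at key
  exact ⟨key.1, key.2⟩

lemma iter_shape (y : Bool) (m : ℕ) : ∃ r, muW^[m] [y, !y, y] = y :: (!y) :: r := by
  induction m with
  | zero => exact ⟨[y], rfl⟩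
  | succ m ih =>
    obtain ⟨r, hr⟩ := ih
    exact ⟨(!y) :: y :: muW r, by
      rw [Function.iterate_succ_apply', hr, muW_cons, muW_cons, Bool.not_not]⟩

theorem tm_forbidden_iff (t : ℕ → Bool) (ht : IsTMWord t)
    (k : ℕ) (hk : 1 ≤ k) (x y z : Bool) :
    IsFactorI ([x] ++ muW^[k] [y, !y, y] ++ [z]) t ↔
      IsFactorI ([!x] ++ muW^[k - 1] [y, !y, y] ++ [z]) t := by
  obtain ⟨m, rfl⟩ : ∃ m, k = m + 1 := ⟨k - 1, by omega⟩
  simp only [Nat.add_sub_cancel]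
  set W : List Bool := muW^[m] [y, !y, y] with hW
  have hVW : muW^[m+1] [y, !y, y] = muW W := by rw [Function.iterate_succ_apply']
  obtain ⟨r, hr⟩ := iter_shape y m
  rw [hVW]
  set V : List Bool := muW W with hV
  have hVr : V = y :: (!y) :: (!y) :: y :: muW r := by
    rw [hV, ← hW] at *
    rw [hr, muW_cons, muW_cons, Bool.not_not]
  have hLV : V.length = 2 * W.length := by rw [hV, length_muW]
  have tE := fun i => (t_even_odd ht i).1
  have tO := fun i => (t_even_odd ht i).2
  have hLW2 : 2 ≤ W.length := by rw [hW, hr]; simp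
  constructor
  · rintro ⟨q, hq⟩
    simp only [List.length_append, List.length_cons, List.length_singleton,
      List.singleton_append, List.cons_append, List.nil_append, List.length_nil] at hq
    -- hq : ∀ i < V.length + 2 (roughly), (x :: (V ++ [z])).getD i = t (q + i)
    have hx : t q = x := by
      have := hq 0 (by omega)
      simpa using this.symm
    have hVj : ∀ j, j < V.length → V.getD j false = t (q + 1 + j) := by
      intro j hj
      have := hq (j+1) (by omega)
      rw [List.getD_cons_succ, List.getD_append _ _ _ _ hj] at this
      rw [this]; congr 1; omega
    have hz : t (q + 1 + V.length) = z := by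
      have := hq (V.length + 1) (by omega)
      rw [List.getD_cons_succ, List.getD_append_right _ _ _ _ (le_refl _)] at this
      simp at this
      rw [this]; congr 1; omega
    have h1 : V.getD 1 false = !y := by rw [hVr]; rfl
    have h2 : V.getD 2 false = !y := by rw [hVr]; rfl
    have hV4 : 4 ≤ V.length := by omega
    have heq : t (q + 2) = t (q + 3) := by
      rw [← hVj 1 (by omega), ← hVj 2 (by omega), h1, h2]
    -- q must be odd
    obtain ⟨p, hp⟩ : ∃ p, q = 2 * p + 1 := by
      rcases Nat.even_or_odd q with ⟨p, hp⟩ | ⟨p, hp⟩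
      · exfalso
        have e1 : q + 2 = 2 * (p + 1) := by omega
        have e2 : q + 3 = 2 * (p + 1) + 1 := by omega
        rw [e1, e2, tE, tO] at heq
        simp at heq
      · exact ⟨p, by omega⟩
    refine ⟨p, ?_⟩
    intro i hi
    simp only [List.length_append, List.length_cons, List.length_singleton,
      List.singleton_append, List.cons_append, List.nil_append, List.length_nil] at hi ⊢
    rcases i with _ | j
    · 
      have : t (2 * p + 1) = x := by rw [← hp]; exact hx
      rw [tO] at this
      simp only [List.getD_cons_zero, Nat.add_zero]
      cases hxp : t p <;> rw [hxp] at this <;> simp_all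
    · rw [List.getD_cons_succ]
      have hjW : j ≤ W.length := by omega
      rcases lt_or_eq_of_le hjW with hlt | hEq
      · rw [List.getD_append _ _ _ _ hlt]
        have hkey := (muW_getD W j hlt).1
        rw [← hV] at hkey
        have := hVj (2*j) (by omega)
        rw [hkey] at this
        rw [this]
        have e : q + 1 + 2 * j = 2 * (p + 1 + j) := by omega
        rw [e, tE]; congr 1; omega
      · subst hEq
        rw [List.getD_append_right _ _ _ _ (le_refl _)]
        simp only [Nat.sub_self, List.getD_cons_zero]
        rw [← hz]
        have e : q + 1 + V.length = 2 * (p + 1 + W.length) := by omega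
        rw [e, tE]; congr 1; omega
  · rintro ⟨p, hp⟩
    simp only [List.length_append, List.length_cons, List.length_singleton,
      List.singleton_append, List.cons_append, List.nil_append, List.length_nil] at hp
    have hxp : t p = !x := by
      have := hp 0 (by omega)
      simpa using this.symm
    have hWj : ∀ j, j < W.length → W.getD j false = t (p + 1 + j) := by
      intro j hj
      have := hp (j+1) (by omega)
      rw [List.getD_cons_succ, List.getD_append _ _ _ _ hj] at this
      rw [this]; congr 1; omega
    have hz : t (p + 1 + W.length) = z := by
      have := hp (W.length + 1) (by omega)
      rw [List.getD_cons_succ, List.getD_append_right _ _ _ _ (le_refl _)] at this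
      simp at this
      rw [this]; congr 1; omega
    refine ⟨2 * p + 1, ?_⟩
    intro i hi
    simp only [List.length_append, List.length_cons, List.length_singleton,
      List.singleton_append, List.cons_append, List.nil_append, List.length_nil] at hi ⊢
    rcases i with _ | j
    · 
      simp only [List.getD_cons_zero, Nat.add_zero]
      rw [tO, hxp, Bool.not_not]
    · rw [List.getD_cons_succ]
      rcases lt_or_eq_of_le (show j ≤ V.length by omega) with hlt | hEq
      · rw [List.getD_append _ _ _ _ hlt]
        have hj2 : j / 2 < W.length := by omega
        have hkey := muW_getD W (j/2) hj2
        rw [← hV] at hkey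
        rcases Nat.even_or_odd j with ⟨j', hj'⟩ | ⟨j', hj'⟩
        · have ej : j = 2 * (j/2) := by omega
          rw [ej, hkey.1, hWj _ hj2]
          have e : 2 * p + 1 + (2 * (j/2) + 1) = 2 * (p + 1 + j/2) := by omega
          rw [e, tE]
        · have ej : j = 2 * (j/2) + 1 := by omega
          rw [ej, hkey.2, hWj _ hj2]
          have e : 2 * p + 1 + (2 * (j/2) + 1 + 1) = 2 * (p + 1 + j/2) + 1 := by omega
          rw [e, tO]
      · subst hEq
        rw [List.getD_append_right _ _ _ _ (le_refl _)]
        simp only [Nat.sub_self, List.getD_cons_zero]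
        rw [← hz]
        have e : 2 * p + 1 + (V.length + 1) = 2 * (p + 1 + W.length) := by omega
        rw [e, tE]
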